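/- For every nonzero x ∈ ℝ^p, a vector u ∈ ℝ^p satisfies uᵀx = Ω_excl(x) and Ω*_excl(u) ≤ 1 if and only if: for every index i with x_i ≠ 0, |u_i| = ‖x_{G_i}‖₁ / Ω_excl(x) and sign(u_i) = sign(x_i); and for every index i with x_i = 0, |u_i| ≤ ‖x_{G_i}‖₁ / Ω_excl(x). Here G_i denotes the unique group containing i. -/

import Mathlib

/-- The exclusive group sparsity norm: groups are the fibers of `g : Fin p → Fin k`. -/
noncomputable def OmegaExcl {p k : ℕ} (g : Fin p → Fin k) (x : Fin p → ℝ) : ℝ :=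
  Real.sqrt (∑ j : Fin k, (∑ i ∈ Finset.univ.filter (fun i => g i = j), |x i|) ^ 2)

/-- The ℓ₁ norm of the subvector of `x` on the group `j`. -/
noncomputable def groupL1 {p k : ℕ} (g : Fin p → Fin k) (x : Fin p → ℝ) (j : Fin k) : ℝ :=
  ∑ i ∈ Finset.univ.filter (fun i => g i = j), |x i|

/-- The ℓ∞ norm of the subvector of `u` on the group `j`. -/
noncomputable def groupLinf {p k : ℕ} (g : Fin p → Fin k) (u : Fin p → ℝ) (j : Fin k) : ℝ :=
  (((Finset.univ.filter (fun i => g i = j)).sup (fun i => ‖u i‖₊) : NNReal) : ℝ)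

/-- The dual norm of the exclusive group sparsity norm. -/
noncomputable def OmegaExclDual {p k : ℕ} (g : Fin p → Fin k) (u : Fin p → ℝ) : ℝ :=
  Real.sqrt (∑ j : Fin k, (groupLinf g u j) ^ 2)

section aux

variable {p k : ℕ} (g : Fin p → Fin k)

lemma groupL1_nonneg (x : Fin p → ℝ) (j : Fin k) : 0 ≤ groupL1 g x j :=
  Finset.sum_nonneg fun _ _ => abs_nonneg _

lemma groupLinf_nonneg (u : Fin p → ℝ) (j : Fin k) : 0 ≤ groupLinf g u j :=
  NNReal.coe_nonneg _

lemma abs_le_groupL1 (x : Fin p → ℝ) (i : Fin p) : |x i| ≤ groupL1 g x (g i) :=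
  Finset.single_le_sum (f := fun i' => |x i'|) (fun _ _ => abs_nonneg _) (by simp)

lemma abs_le_groupLinf (u : Fin p → ℝ) (i : Fin p) : |u i| ≤ groupLinf g u (g i) := by
  have h : ‖u i‖₊ ≤ (Finset.univ.filter (fun i' => g i' = g i)).sup (fun i' => ‖u i'‖₊) :=
    Finset.le_sup (f := fun i' => ‖u i'‖₊) (Finset.mem_filter.mpr ⟨Finset.mem_univ i, rfl⟩)
  rw [groupLinf, ← Real.norm_eq_abs, ← coe_nnnorm]
  exact_mod_cast h

lemma groupLinf_le (u : Fin p → ℝ) (j : Fin k) {c : ℝ} (hc : 0 ≤ c)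
    (h : ∀ i, g i = j → |u i| ≤ c) : groupLinf g u j ≤ c := by
  rw [groupLinf]
  have hs : (Finset.univ.filter (fun i => g i = j)).sup (fun i => ‖u i‖₊) ≤ c.toNNReal := by
    apply Finset.sup_le
    intro i hi
    have hgi : g i = j := by simpa using hi
    rw [← NNReal.coe_le_coe, coe_nnnorm, Real.norm_eq_abs, Real.coe_toNNReal c hc]
    exact h i hgi
  calc (((Finset.univ.filter (fun i => g i = j)).sup (fun i => ‖u i‖₊) : NNReal) : ℝ)
      ≤ (c.toNNReal : ℝ) := NNReal.coe_le_coe.mpr hs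
    _ = c := Real.coe_toNNReal c hc

lemma sign_pos_of_eq_one {r : ℝ} (h : Real.sign r = 1) : 0 < r := by
  rcases lt_trichotomy r 0 with h0 | h0 | h0
  · rw [Real.sign_of_neg h0] at h; norm_num at h
  · rw [h0, Real.sign_zero] at h; norm_num at h
  · exact h0

lemma sign_neg_of_eq_neg_one {r : ℝ} (h : Real.sign r = -1) : r < 0 := by
  rcases lt_trichotomy r 0 with h0 | h0 | h0
  · exact h0
  · rw [h0, Real.sign_zero] at h; norm_num at h
  · rw [Real.sign_of_pos h0] at h; norm_num at h

end aux

/-- Characterization of the subdifferential of `Ω_excl` at a nonzero point. -/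
theorem omegaExcl_subdiff_char {p k : ℕ} (g : Fin p → Fin k)
    (hsurj : Function.Surjective g) (x : Fin p → ℝ) (hx : x ≠ 0) (u : Fin p → ℝ) :
    ((∑ i, u i * x i) = OmegaExcl g x ∧ OmegaExclDual g u ≤ 1) ↔
      ((∀ i, x i ≠ 0 →
          |u i| = groupL1 g x (g i) / OmegaExcl g x ∧ Real.sign (u i) = Real.sign (x i)) ∧
       (∀ i, x i = 0 → |u i| ≤ groupL1 g x (g i) / OmegaExcl g x)) := by
  set L := groupL1 g x with hLdef
  set M := groupLinf g u with hMdef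
  set Ω := OmegaExcl g x with hΩdef
  have hL0 : ∀ j, 0 ≤ L j := groupL1_nonneg g x
  have hM0 : ∀ j, 0 ≤ M j := groupLinf_nonneg g u
  have hxL : ∀ i, |x i| ≤ L (g i) := abs_le_groupL1 g x
  have huM : ∀ i, |u i| ≤ M (g i) := abs_le_groupLinf g u
  have hΩeq : Ω = Real.sqrt (∑ j, L j ^ 2) := rfl
  have hΩsq : Ω ^ 2 = ∑ j, L j ^ 2 := by
    rw [hΩeq]
    exact Real.sq_sqrt (Finset.sum_nonneg fun j _ => sq_nonneg _)
  have hΩpos : 0 < Ω := by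
    obtain ⟨i, hi⟩ := Function.ne_iff.mp hx
    rw [hΩeq]
    apply Real.sqrt_pos.mpr
    have h1 : 0 < L (g i) ^ 2 := by
      have h2 : 0 < |x i| := abs_pos.mpr hi
      have h3 : 0 < L (g i) := lt_of_lt_of_le h2 (hxL i)
      positivity
    calc (0:ℝ) < L (g i) ^ 2 := h1
      _ ≤ ∑ j, L j ^ 2 :=
        Finset.single_le_sum (fun j _ => sq_nonneg (L j)) (Finset.mem_univ _)
  have hΩne : Ω ≠ 0 := ne_of_gt hΩpos
  have hdual : OmegaExclDual g u = Real.sqrt (∑ j, M j ^ 2) := rfl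
  -- fiberwise sum identity for any coefficient function c : Fin k → ℝ
  have hfiber : ∀ c : Fin k → ℝ, ∑ i, c (g i) * |x i| = ∑ j, c j * L j := by
    intro c
    rw [← Finset.sum_fiberwise Finset.univ g (fun i => c (g i) * |x i|)]
    apply Finset.sum_congr rfl
    intro j _
    rw [hLdef, groupL1, Finset.mul_sum]
    apply Finset.sum_congr rfl
    intro i hi
    have : g i = j := by simpa using hi
    rw [this]
  constructor
  · rintro ⟨h1, h2⟩
    have hM2 : ∑ j, M j ^ 2 ≤ 1 := by
      rw [hdual] at h2
      exact Real.sqrt_le_one.mp h2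
    -- termwise bound
    have hterm : ∀ i, u i * x i ≤ M (g i) * |x i| := by
      intro i
      calc u i * x i ≤ |u i * x i| := le_abs_self _
        _ = |u i| * |x i| := abs_mul _ _
        _ ≤ M (g i) * |x i| := mul_le_mul_of_nonneg_right (huM i) (abs_nonneg _)
    have hA1 : Ω ≤ ∑ i, M (g i) * |x i| := by
      rw [← h1]; exact Finset.sum_le_sum fun i _ => hterm i
    have hA2 : ∑ i, M (g i) * |x i| = ∑ j, M j * L j := hfiber M
    -- AM-GM bound
    have hB : 2 * Ω * (∑ j, M j * L j) ≤ Ω ^ 2 * (∑ j, M j ^ 2) + ∑ j, L j ^ 2 := by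
      have hj : ∀ j, 2 * Ω * (M j * L j) ≤ Ω ^ 2 * M j ^ 2 + L j ^ 2 := by
        intro j; nlinarith [sq_nonneg (Ω * M j - L j)]
      calc 2 * Ω * (∑ j, M j * L j) = ∑ j, 2 * Ω * (M j * L j) := Finset.mul_sum _ _ _
        _ ≤ ∑ j, (Ω ^ 2 * M j ^ 2 + L j ^ 2) := Finset.sum_le_sum fun j _ => hj j
        _ = Ω ^ 2 * (∑ j, M j ^ 2) + ∑ j, L j ^ 2 := by
            rw [Finset.sum_add_distrib, ← Finset.mul_sum]
    have hMLle : ∑ j, M j * L j ≤ Ω := by nlinarith [hB, hM2, hΩsq, hΩpos]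
    have hMLeq : ∑ j, M j * L j = Ω := le_antisymm hMLle (by rw [← hA2]; exact hA1)
    have hM2eq : ∑ j, M j ^ 2 = 1 := by
      have h' : Ω ^ 2 * 1 ≤ Ω ^ 2 * (∑ j, M j ^ 2) := by nlinarith [hB, hMLeq, hΩsq]
      have h'' : (1:ℝ) ≤ ∑ j, M j ^ 2 := (mul_le_mul_iff_right₀ (by positivity)).mp h'
      linarith
    -- each group: Ω * M j = L j
    have hz : ∑ j, (Ω * M j - L j) ^ 2 = 0 := by
      have hexp : ∀ j, (Ω * M j - L j) ^ 2
          = Ω ^ 2 * M j ^ 2 - 2 * Ω * (M j * L j) + L j ^ 2 := fun j => by ring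
      calc ∑ j, (Ω * M j - L j) ^ 2
          = ∑ j, (Ω ^ 2 * M j ^ 2 - 2 * Ω * (M j * L j) + L j ^ 2) :=
            Finset.sum_congr rfl fun j _ => hexp j
        _ = Ω ^ 2 * (∑ j, M j ^ 2) - 2 * Ω * (∑ j, M j * L j) + ∑ j, L j ^ 2 := by
            rw [Finset.sum_add_distrib, Finset.sum_sub_distrib, ← Finset.mul_sum,
              ← Finset.mul_sum]
        _ = 0 := by rw [hM2eq, hMLeq, ← hΩsq]; ring
    have hMj : ∀ j, M j = L j / Ω := by
      intro j
      have := (Finset.sum_eq_zero_iff_of_nonneg (fun j _ => sq_nonneg (Ω * M j - L j))).mp hz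
        j (Finset.mem_univ j)
      have h0 : Ω * M j - L j = 0 := by
        exact pow_eq_zero_iff (n := 2) (by norm_num) |>.mp this
      field_simp
      linarith
    -- termwise equality
    have hAeq : ∑ i, M (g i) * |x i| = Ω := by rw [hA2, hMLeq]
    have hzz : ∑ i, (M (g i) * |x i| - u i * x i) = 0 := by
      rw [Finset.sum_sub_distrib, hAeq, h1, sub_self]
    have hueq : ∀ i, u i * x i = M (g i) * |x i| := by
      intro i
      have := (Finset.sum_eq_zero_iff_of_nonneg
        (fun i _ => sub_nonneg.mpr (hterm i))).mp hzz i (Finset.mem_univ i)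
      linarith [sub_eq_zero.mp this]
    constructor
    · intro i hxi
      have hxip : 0 < |x i| := abs_pos.mpr hxi
      have hLpos : 0 < L (g i) := lt_of_lt_of_le hxip (hxL i)
      have hMpos : 0 < M (g i) := by rw [hMj]; exact div_pos hLpos hΩpos
      have huabs : |u i| = M (g i) := by
        have h1' : u i * x i ≤ |u i| * |x i| := by
          rw [← abs_mul]; exact le_abs_self _
        have h2' : M (g i) * |x i| ≤ |u i| * |x i| := by rw [← hueq i]; exact h1'
        have := le_of_mul_le_mul_right h2' hxip
        exact le_antisymm (huM i) this
      refine ⟨by rw [huabs, hMj], ?_⟩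
      have hprod : 0 < u i * x i := by rw [hueq i]; positivity
      rcases lt_or_gt_of_ne hxi with hneg | hpos
      · have hun : u i < 0 := by nlinarith
        rw [Real.sign_of_neg hun, Real.sign_of_neg hneg]
      · have hup : 0 < u i := by nlinarith
        rw [Real.sign_of_pos hup, Real.sign_of_pos hpos]
    · intro i _
      calc |u i| ≤ M (g i) := huM i
        _ = L (g i) / Ω := hMj (g i)
  · rintro ⟨h1, h2⟩
    have hub : ∀ i, |u i| ≤ L (g i) / Ω := by
      intro i
      by_cases hxi : x i = 0
      · exact h2 i hxi
      · exact le_of_eq (h1 i hxi).1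
    have hMle : ∀ j, M j ≤ L j / Ω := by
      intro j
      apply groupLinf_le g u j (div_nonneg (hL0 j) hΩpos.le)
      intro i hgi
      have := hub i
      rwa [hgi] at this
    constructor
    · -- sum equality
      have hterm : ∀ i, u i * x i = (L (g i) / Ω) * |x i| := by
        intro i
        by_cases hxi : x i = 0
        · rw [hxi]; simp
        · obtain ⟨habs, hsgn⟩ := h1 i hxi
          rcases lt_or_gt_of_ne hxi with hneg | hpos
          · have hun : u i < 0 := by
              apply sign_neg_of_eq_neg_one
              rw [hsgn, Real.sign_of_neg hneg]
            rw [abs_of_neg hun] at habs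
            rw [abs_of_neg hneg]
            nlinarith [habs]
          · have hup : 0 < u i := by
              apply sign_pos_of_eq_one
              rw [hsgn, Real.sign_of_pos hpos]
            rw [abs_of_pos hup] at habs
            rw [abs_of_pos hpos, habs]
      calc ∑ i, u i * x i = ∑ i, (L (g i) / Ω) * |x i| :=
            Finset.sum_congr rfl fun i _ => hterm i
        _ = ∑ j, (L j / Ω) * L j := hfiber (fun j => L j / Ω)
        _ = (∑ j, L j ^ 2) / Ω := by
            rw [Finset.sum_div]
            apply Finset.sum_congr rfl
            intro j _; ring
        _ = Ω := by rw [← hΩsq, sq, mul_div_assoc, div_self hΩne, mul_one]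
    · rw [hdual]
      apply Real.sqrt_le_one.mpr
      calc ∑ j, M j ^ 2 ≤ ∑ j, (L j / Ω) ^ 2 :=
            Finset.sum_le_sum fun j _ => pow_le_pow_left₀ (hM0 j) (hMle j) 2
        _ = (∑ j, L j ^ 2) / Ω ^ 2 := by
            rw [Finset.sum_div]
            apply Finset.sum_congr rfl
            intro j _; ring
        _ = 1 := by rw [← hΩsq, div_self (pow_ne_zero 2 hΩne)]
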